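/- For integers n ≥ 2, k ≥ 1 and positive integers d_1,...,d_k, with F_n defined as the alternating sum F_n(t; d_1,...,d_k) = Σ_{I ⊆ {1,...,k}} (-1)^{|I|} C(t + n - d_I, n), the following recursion holds: n·F_n(t; d_1,...,d_k) = (t + n - Σ_{i=1}^k d_i)·F_{n-1}(t; d_1,...,d_k) + Σ_{i=1}^k d_i · F_{n-1}(t; d_1,...,d̂_i,...,d_k). -/

import Mathlib

open Polynomial Finset

/-- The binomial coefficient polynomial `C(t, n) = (1/n!) ∏_{j=0}^{n-1} (t - j)`,
as a polynomial in `t` with rational coefficients. -/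
noncomputable def binomPoly (n : ℕ) : Polynomial ℚ :=
  Polynomial.C ((n.factorial : ℚ)⁻¹) * ∏ j ∈ Finset.range n, (Polynomial.X - Polynomial.C (j : ℚ))

/-- `Fpoly n s d = Σ_{I ⊆ s} (-1)^{|I|} C(t + n - d_I, n)` where `d_I = Σ_{i ∈ I} d i`.
For `s = {0, 1, …, k-1}` this is the polynomial `F_n(t; d_1, …, d_k)` of the paper. -/
noncomputable def Fpoly (n : ℕ) (s : Finset ℕ) (d : ℕ → ℕ) : Polynomial ℚ :=
  ∑ I ∈ s.powerset,
    Polynomial.C ((-1 : ℚ) ^ I.card) *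
      (binomPoly n).comp (Polynomial.X + Polynomial.C ((n : ℚ) - ∑ i ∈ I, (d i : ℚ)))

lemma binomPoly_succ_key (m : ℕ) :
    Polynomial.C (((m+1 : ℕ)) : ℚ) * binomPoly (m+1)
      = Polynomial.X * (binomPoly m).comp (Polynomial.X - Polynomial.C 1) := by
  unfold binomPoly
  rw [Polynomial.mul_comp, Polynomial.C_comp, Polynomial.prod_comp]
  have h1 : ∏ j ∈ Finset.range (m+1), (Polynomial.X - Polynomial.C ((j : ℚ)))
      = (∏ j ∈ Finset.range m, (Polynomial.X - Polynomial.C (((j+1 : ℕ) : ℚ)))) *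
        (Polynomial.X - Polynomial.C ((0 : ℕ) : ℚ)) := by
    rw [Finset.prod_range_succ']
  have h2 : ∀ j ∈ Finset.range m,
      (Polynomial.X - Polynomial.C ((j : ℚ))).comp (Polynomial.X - Polynomial.C 1)
        = Polynomial.X - Polynomial.C (((j+1 : ℕ) : ℚ)) := by
    intro j _
    push_cast
    simp [Polynomial.sub_comp]
    ring
  rw [Finset.prod_congr rfl h2] at *
  rw [h1]
  have hfac : (((m+1 : ℕ)) : ℚ) * ((((m+1 : ℕ).factorial : ℚ))⁻¹)
      = ((m.factorial : ℚ))⁻¹ := by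
    rw [Nat.factorial_succ]
    push_cast
    rw [mul_inv]
    rw [← mul_assoc, mul_inv_cancel₀ (by positivity), one_mul]
  rw [← mul_assoc, ← Polynomial.C_mul, hfac]
  simp
  ring

lemma binomPoly_key (n : ℕ) (hn : 1 ≤ n) (a : ℚ) :
    Polynomial.C (n : ℚ) * (binomPoly n).comp (Polynomial.X + Polynomial.C a)
      = (Polynomial.X + Polynomial.C a) *
          (binomPoly (n-1)).comp (Polynomial.X + Polynomial.C (a-1)) := by
  obtain ⟨m, rfl⟩ : ∃ m, n = m + 1 := ⟨n - 1, (Nat.succ_pred_eq_of_pos hn).symm⟩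
  have := congrArg (fun p => p.comp (Polynomial.X + Polynomial.C a)) (binomPoly_succ_key m)
  simp only [Polynomial.mul_comp, Polynomial.C_comp, Polynomial.X_comp] at this
  rw [this, Polynomial.comp_assoc]
  have h3 : (Polynomial.X - Polynomial.C (1:ℚ)).comp (Polynomial.X + Polynomial.C a)
      = Polynomial.X + Polynomial.C (a - 1) := by
    simp only [Polynomial.sub_comp, Polynomial.X_comp, Polynomial.C_comp, map_sub]
    ring
  rw [h3]
  norm_num

theorem statement1 (n k : ℕ) (hn : 2 ≤ n) (hk : 1 ≤ k) (d : ℕ → ℕ)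
    (hd : ∀ i ∈ Finset.range k, 0 < d i) :
    Polynomial.C (n : ℚ) * Fpoly n (Finset.range k) d
      = (Polynomial.X + Polynomial.C ((n : ℚ) - ∑ i ∈ Finset.range k, (d i : ℚ))) *
          Fpoly (n - 1) (Finset.range k) d
        + ∑ i ∈ Finset.range k,
            Polynomial.C ((d i : ℚ)) * Fpoly (n - 1) ((Finset.range k).erase i) d := by
  set s := Finset.range k with hs
  set D : ℚ := ∑ i ∈ s, (d i : ℚ) with hD
  have hcast : ((n - 1 : ℕ) : ℚ) = (n : ℚ) - 1 := by
    have : 1 ≤ n := le_trans (by norm_num) hn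
    push_cast [this]
    ring
  -- per-subset abbreviation
  set G : Finset ℕ → Polynomial ℚ := fun I =>
    (binomPoly (n-1)).comp (Polynomial.X + Polynomial.C (((n-1 : ℕ) : ℚ) - ∑ i ∈ I, (d i : ℚ)))
    with hG
  -- LHS
  have hLHS : Polynomial.C (n : ℚ) * Fpoly n s d
      = ∑ I ∈ s.powerset, Polynomial.C ((-1 : ℚ) ^ I.card) *
          ((Polynomial.X + Polynomial.C ((n : ℚ) - ∑ i ∈ I, (d i : ℚ))) * G I) := by
    rw [Fpoly, Finset.mul_sum]
    refine Finset.sum_congr rfl fun I _ => ?_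
    rw [mul_left_comm]
    congr 1
    rw [binomPoly_key n (le_trans (by norm_num) hn)]
    congr 2
    rw [hcast]
    ring
  -- second part of RHS
  have hpe : ∀ i : ℕ, (s.erase i).powerset = s.powerset.filter (fun I => i ∉ I) := by
    intro i
    ext I
    simp [Finset.mem_powerset, Finset.subset_erase, and_comm]
  have hRHS2 : ∑ i ∈ s, Polynomial.C ((d i : ℚ)) * Fpoly (n - 1) (s.erase i) d
      = ∑ I ∈ s.powerset, Polynomial.C ((-1 : ℚ) ^ I.card) *
          (Polynomial.C (D - ∑ i ∈ I, (d i : ℚ)) * G I) := by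
    have : ∀ i ∈ s, Polynomial.C ((d i : ℚ)) * Fpoly (n - 1) (s.erase i) d
        = ∑ I ∈ s.powerset, (if i ∈ I then 0 else
            Polynomial.C ((d i : ℚ)) * (Polynomial.C ((-1 : ℚ) ^ I.card) * G I)) := by
      intro i _
      rw [Fpoly, hpe i, Finset.sum_filter, Finset.mul_sum]
      refine Finset.sum_congr rfl fun I _ => ?_
      by_cases h : i ∈ I <;> simp [h, hG]
    rw [Finset.sum_congr rfl this, Finset.sum_comm]
    refine Finset.sum_congr rfl fun I hI => ?_
    have hIs : I ⊆ s := Finset.mem_powerset.mp hI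
    have : ∑ i ∈ s, (if i ∈ I then 0 else
        Polynomial.C ((d i : ℚ)) * (Polynomial.C ((-1 : ℚ) ^ I.card) * G I))
        = ∑ i ∈ s \ I, Polynomial.C ((d i : ℚ)) * (Polynomial.C ((-1 : ℚ) ^ I.card) * G I) := by
      rw [Finset.sum_ite, Finset.sum_const_zero, zero_add, Finset.sdiff_eq_filter]
    rw [this, ← Finset.sum_mul]
    have hsum : ∑ i ∈ s \ I, Polynomial.C ((d i : ℚ))
        = Polynomial.C (D - ∑ i ∈ I, (d i : ℚ)) := by
      rw [← map_sum, Finset.sum_sdiff_eq_sub hIs, map_sub]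
    rw [hsum]
    ring
  -- first part of RHS
  have hRHS1 : (Polynomial.X + Polynomial.C ((n : ℚ) - D)) * Fpoly (n - 1) s d
      = ∑ I ∈ s.powerset, Polynomial.C ((-1 : ℚ) ^ I.card) *
          ((Polynomial.X + Polynomial.C ((n : ℚ) - D)) * G I) := by
    rw [Fpoly, Finset.mul_sum]
    refine Finset.sum_congr rfl fun I _ => ?_
    ring
  rw [hLHS, hRHS1, hRHS2, ← Finset.sum_add_distrib]
  refine Finset.sum_congr rfl fun I _ => ?_
  rw [← mul_add]
  congr 1
  simp only [map_sub]
  ring
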